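/- Let n ≥ 2 be an integer and let x₁, x₂ : ℝ → ℂ satisfy x₁(−t) = e^{−iπ/n}·x₂(t) and x₂(−t) = e^{iπ/n}·x₁(t) for all real t. Define u(t) = π(x₁(t), x₂(t)) ∈ ℝ³. Then u(−t) = M(−1)·u(t) for all real t; in particular M(−1)·u(0) = u(0). -/

import Mathlib

open Real Matrix

/-- The map `π : ℂ × ℂ → ℝ³`,
`π(x₁,x₂) = (|x₁|² − |x₂|², 2 Re(x₁ x̄₂), 2 Im(x₁ x̄₂))`. -/
noncomputable def piMap (x : ℂ × ℂ) : Fin 3 → ℝ :=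
  ![‖x.1‖ ^ 2 - ‖x.2‖ ^ 2,
    2 * (x.1 * (starRingEnd ℂ) x.2).re,
    2 * (x.1 * (starRingEnd ℂ) x.2).im]

/-- The 3×3 real matrix `M(k)` with rows `(−1,0,0)`, `(0, cos(2πk/n), sin(2πk/n))`,
`(0, sin(2πk/n), −cos(2πk/n))`. -/
noncomputable def Mmat (n : ℕ) (k : ℤ) : Matrix (Fin 3) (Fin 3) ℝ :=
  !![-1, 0, 0;
     0, Real.cos (2 * π * k / n), Real.sin (2 * π * k / n);
     0, Real.sin (2 * π * k / n), -Real.cos (2 * π * k / n)]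

/-- If `x₁(−t) = e^{−iπ/n}x₂(t)` and `x₂(−t) = e^{iπ/n}x₁(t)` for all `t`, then the
shape curve `u(t) = π(x₁(t), x₂(t))` satisfies `u(−t) = M(−1)·u(t)`; in particular
`M(−1)·u(0) = u(0)`. -/
theorem shape_curve_symmetry (n : ℕ) (hn : 2 ≤ n) (x₁ x₂ : ℝ → ℂ)
    (h₁ : ∀ t : ℝ, x₁ (-t) = Complex.exp (-(π : ℂ) * Complex.I / (n : ℂ)) * x₂ t)
    (h₂ : ∀ t : ℝ, x₂ (-t) = Complex.exp ((π : ℂ) * Complex.I / (n : ℂ)) * x₁ t)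
    (u : ℝ → Fin 3 → ℝ) (hu : ∀ t : ℝ, u t = piMap (x₁ t, x₂ t)) :
    (∀ t : ℝ, u (-t) = (Mmat n (-1)).mulVec (u t)) ∧
    (Mmat n (-1)).mulVec (u 0) = u 0 := by
  have ea : Complex.exp (-(π : ℂ) * Complex.I / (n : ℂ)) =
      Complex.exp ((↑(-(π / n)) : ℂ) * Complex.I) := by congr 1; push_cast; ring
  have eb : Complex.exp ((π : ℂ) * Complex.I / (n : ℂ)) =
      Complex.exp ((↑(π / n) : ℂ) * Complex.I) := by congr 1; push_cast; ring
  set c := Real.cos (π / n) with hc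
  set s := Real.sin (π / n) with hs
  have hcs : s ^ 2 + c ^ 2 = 1 := Real.sin_sq_add_cos_sq _
  have hcos2 : Real.cos (2 * π * (-1 : ℤ) / n) = c ^ 2 - s ^ 2 := by
    have h : (2 * π * ((-1 : ℤ) : ℝ) / n) = -(2 * (π / n)) := by push_cast; ring
    rw [h, Real.cos_neg, Real.cos_two_mul, hc]; nlinarith [hcs]
  have hsin2 : Real.sin (2 * π * (-1 : ℤ) / n) = -(2 * s * c) := by
    have h : (2 * π * ((-1 : ℤ) : ℝ) / n) = -(2 * (π / n)) := by push_cast; ring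
    rw [h, Real.sin_neg, Real.sin_two_mul]
  have hmain : ∀ t : ℝ, u (-t) = (Mmat n (-1)).mulVec (u t) := by
    intro t
    have e1 := h₁ t
    have e2 := h₂ t
    rw [ea, Complex.exp_mul_I] at e1
    rw [eb, Complex.exp_mul_I] at e2
    funext i
    have ha : ‖Complex.exp (-(π : ℂ) * Complex.I / (n : ℂ))‖ = 1 := by
      rw [ea]; simp [Complex.norm_exp]
    have hb : ‖Complex.exp ((π : ℂ) * Complex.I / (n : ℂ))‖ = 1 := by
      rw [eb]; simp [Complex.norm_exp]
    have htwo : (⟨2, by omega⟩ : Fin 3) = 2 := rfl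
    fin_cases i <;> simp only [Fin.zero_eta, Fin.mk_one, htwo]
    · simp only [hu, piMap, Mmat, Matrix.mulVec, dotProduct, Fin.sum_univ_three,
        Matrix.cons_val', Matrix.cons_val_zero, Matrix.cons_val_one, Matrix.head_cons,
        Matrix.empty_val', Matrix.cons_val_fin_one, Matrix.head_fin_const,
        Matrix.of_apply, Matrix.cons_val_two, Matrix.tail_cons, Fin.isValue,
        h₁ t, h₂ t, _root_.map_mul, norm_mul, ha, hb]
      ring
    all_goals
      simp only [hu, piMap, Mmat, Matrix.mulVec, dotProduct, Fin.sum_univ_three,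
        Matrix.cons_val', Matrix.cons_val_zero, Matrix.cons_val_one, Matrix.head_cons,
        Matrix.empty_val', Matrix.cons_val_fin_one, Matrix.head_fin_const,
        Matrix.of_apply, Matrix.cons_val_two, Matrix.tail_cons, hcos2, hsin2, e1, e2,
        Fin.isValue, Complex.mul_re, Complex.mul_im, Complex.conj_re, Complex.conj_im,
        Complex.add_re, Complex.add_im, Complex.mul_I_re, Complex.mul_I_im,
        Complex.cos_ofReal_re, Complex.cos_ofReal_im, Complex.sin_ofReal_re,
        Complex.sin_ofReal_im, Real.cos_neg, Real.sin_neg, Complex.I_re, Complex.I_im]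
    · ring
    · ring
  refine ⟨hmain, ?_⟩
  have h0 := hmain 0
  rw [neg_zero] at h0
  exact h0.symm
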